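/- Let Φ be a rule set and κ a regular cardinal such that every rule (P, c) ∈ Φ satisfies |P| < κ. Then Iter_Φ(κ) is a fixed point of op_Φ, i.e., the closing ordinal of Φ is at most κ. -/

import Mathlib

universe u
variable {U : Type u}

/-- The operator associated to a rule set: collect conclusions of rules whose premises hold. -/
def RuleOp (Φ : Set (Set U × U)) (X : Set U) : Set U :=
  {c | ∃ P, (P, c) ∈ Φ ∧ P ⊆ X}

/-- A set is Φ-closed if it contains the conclusion of every rule whose premises it contains. -/
def RuleClosed (Φ : Set (Set U × U)) (X : Set U) : Prop :=
  ∀ P c, (P, c) ∈ Φ → P ⊆ X → c ∈ X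

/-- The intersection of all Φ-closed sets. -/
def RuleLfp (Φ : Set (Set U × U)) : Set U :=
  ⋂₀ {X | RuleClosed Φ X}

/-- Transfinite iteration of the rule-set operator. -/
noncomputable def RuleIter (Φ : Set (Set U × U)) : Ordinal.{u} → Set U
  | α => ⋃ β : {β : Ordinal.{u} // β < α}, (RuleIter Φ β.1 ∪ RuleOp Φ (RuleIter Φ β.1))
  termination_by α => α
  decreasing_by exact β.2


lemma ruleIter_eq (Φ : Set (Set U × U)) (α : Ordinal.{u}) :
    RuleIter Φ α =
      ⋃ β : {β : Ordinal.{u} // β < α}, (RuleIter Φ β.1 ∪ RuleOp Φ (RuleIter Φ β.1)) := by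
  rw [RuleIter]

lemma subset_ruleIter (Φ : Set (Set U × U)) {β α : Ordinal.{u}} (h : β < α) :
    RuleIter Φ β ∪ RuleOp Φ (RuleIter Φ β) ⊆ RuleIter Φ α := by
  rw [ruleIter_eq Φ α]
  exact Set.subset_iUnion
    (fun b : {β : Ordinal.{u} // β < α} => RuleIter Φ b.1 ∪ RuleOp Φ (RuleIter Φ b.1)) ⟨β, h⟩

lemma ruleIter_mono (Φ : Set (Set U × U)) {β α : Ordinal.{u}} (h : β ≤ α) :
    RuleIter Φ β ⊆ RuleIter Φ α := by
  rw [ruleIter_eq Φ β, ruleIter_eq Φ α]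
  exact Set.iUnion_mono' fun ⟨γ, hγ⟩ => ⟨⟨γ, lt_of_lt_of_le hγ h⟩, subset_rfl⟩

lemma ruleOp_mono (Φ : Set (Set U × U)) {X Y : Set U} (h : X ⊆ Y) :
    RuleOp Φ X ⊆ RuleOp Φ Y := fun c ⟨P, hP, hsub⟩ => ⟨P, hP, hsub.trans h⟩

lemma mem_ruleOp_of_mem_ruleIter (Φ : Set (Set U × U)) (α : Ordinal.{u}) {x : U}
    (hx : x ∈ RuleIter Φ α) : ∃ β < α, x ∈ RuleOp Φ (RuleIter Φ β) := by
  induction α using Ordinal.induction with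
  | h α ih =>
    rw [ruleIter_eq] at hx
    obtain ⟨_, ⟨⟨β, hβ⟩, rfl⟩, hmem⟩ := hx
    rcases hmem with h | h
    · obtain ⟨γ, hγ, hγ'⟩ := ih β hβ h
      exact ⟨γ, hγ.trans hβ, hγ'⟩
    · exact ⟨β, hβ, h⟩

theorem closing_ordinal_le_regular (Φ : Set (Set U × U)) (κ : Cardinal.{u})
    (hreg : κ.IsRegular)
    (hcard : ∀ P c, (P, c) ∈ Φ → Cardinal.mk P < κ) :
    RuleOp Φ (RuleIter Φ κ.ord) = RuleIter Φ κ.ord := by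
  apply Set.Subset.antisymm
  · rintro c ⟨P, hP, hsub⟩
    have hlim := Cardinal.isSuccLimit_ord hreg.aleph0_le
    have hch : ∀ p : P, ∃ β : Ordinal.{u}, β < κ.ord ∧ (p : U) ∈ RuleIter Φ β := by
      intro p
      have := hsub p.2
      rw [ruleIter_eq] at this
      obtain ⟨_, ⟨⟨β, hβ⟩, rfl⟩, hmem⟩ := this
      exact ⟨β + 1, (by rw [Ordinal.add_one_eq_succ]; exact hlim.succ_lt hβ), subset_ruleIter Φ (Order.lt_succ β) hmem⟩
    choose f hf hf' using hch
    have hγ : (⨆ p : P, f p) < κ.ord := by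
      exact Cardinal.iSup_lt_ord_lift_of_isRegular hreg
        (by rw [Cardinal.lift_id]; exact hcard P c hP) hf
    refine subset_ruleIter Φ hγ (Or.inr ⟨P, hP, fun p hp => ?_⟩)
    exact ruleIter_mono Φ (le_ciSup (Ordinal.bddAbove_range _) (⟨p, hp⟩ : P)) (hf' ⟨p, hp⟩)
  · intro x hx
    obtain ⟨β, hβ, hx'⟩ := mem_ruleOp_of_mem_ruleIter Φ κ.ord hx
    exact ruleOp_mono Φ (ruleIter_mono Φ hβ.le) hx'
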